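/- Let T, S ∈ B_A(H). Then max{‖T+S‖_A², ‖T−S‖_A²} ≥ | ‖T+S‖_A² − ‖T−S‖_A² |/2 + max{ ‖T² + S²‖_A, ‖T^{♯_A}T + S^{♯_A}S‖_A, ‖TT^{♯_A} + SS^{♯_A}‖_A }. -/

import Mathlib

open ContinuousLinearMap

/-- The `A`-seminorm of a vector: `‖x‖_A = √⟨Ax, x⟩`. -/
noncomputable def vnormA {H : Type*} [NormedAddCommGroup H] [InnerProductSpace ℂ H]
    (A : H →L[ℂ] H) (x : H) : ℝ :=
  Real.sqrt (RCLike.re (inner ℂ (A x) x : ℂ))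

/-- `T` is `A`-bounded, i.e. `T ∈ B_{A^{1/2}}(H)`. -/
def ABounded {H : Type*} [NormedAddCommGroup H] [InnerProductSpace ℂ H]
    (A T : H →L[ℂ] H) : Prop :=
  ∃ c : ℝ, 0 < c ∧ ∀ x, vnormA A (T x) ≤ c * vnormA A x

/-- The `A`-operator seminorm `‖T‖_A = sup{‖Tx‖_A : ‖x‖_A = 1}`. -/
noncomputable def opNormA {H : Type*} [NormedAddCommGroup H] [InnerProductSpace ℂ H]
    (A T : H →L[ℂ] H) : ℝ :=
  sSup {c : ℝ | ∃ x : H, vnormA A x = 1 ∧ c = vnormA A (T x)}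

/-- The `A`-numerical radius `ω_A(T) = sup{|⟨ATx, x⟩| : ‖x‖_A = 1}`. -/
noncomputable def wA {H : Type*} [NormedAddCommGroup H] [InnerProductSpace ℂ H]
    (A T : H →L[ℂ] H) : ℝ :=
  sSup {c : ℝ | ∃ x : H, vnormA A x = 1 ∧ c = ‖(inner ℂ (A (T x)) x : ℂ)‖}

/-- `Ts` is the reduced (Douglas) solution of `AX = T*A`, i.e. `Ts = T^{♯_A}`. -/
def IsReducedAdjoint {H : Type*} [NormedAddCommGroup H] [InnerProductSpace ℂ H]
    [CompleteSpace H] (A T Ts : H →L[ℂ] H) : Prop :=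
  A ∘L Ts = (ContinuousLinearMap.adjoint T) ∘L A ∧
    ∀ y, Ts y ∈ closure (Set.range A)

/-- The `2 × 2` operator matrix `[[P, Q], [R, S]]` acting on `H ⊕ H` (with the `ℓ²` product
inner product). -/
noncomputable def blk {H : Type*} [NormedAddCommGroup H] [InnerProductSpace ℂ H]
    (P Q R S : H →L[ℂ] H) : WithLp 2 (H × H) →L[ℂ] WithLp 2 (H × H) :=
  letI e := (WithLp.prodContinuousLinearEquiv 2 ℂ H H)
  (e.symm.toContinuousLinearMap) ∘L
    ((P.comp (fst ℂ H H) + Q.comp (snd ℂ H H)).prod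
      (R.comp (fst ℂ H H) + S.comp (snd ℂ H H))) ∘L
    (e.toContinuousLinearMap)

/-- `𝔸 = diag(A, A)` on `H ⊕ H`. -/
noncomputable def AA {H : Type*} [NormedAddCommGroup H] [InnerProductSpace ℂ H]
    (A : H →L[ℂ] H) : WithLp 2 (H × H) →L[ℂ] WithLp 2 (H × H) :=
  blk A 0 0 A

section Aux

variable {H : Type*} [NormedAddCommGroup H] [InnerProductSpace ℂ H]

local notation "⟪" x ", " y "⟫" => @inner ℂ _ _ x y

lemma vnormA_nonneg (A : H →L[ℂ] H) (x : H) : 0 ≤ vnormA A x := Real.sqrt_nonneg _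

variable [CompleteSpace H] {A : H →L[ℂ] H}

lemma vnormA_sq (hA : A.IsPositive) (x : H) :
    vnormA A x ^ 2 = RCLike.re ⟪A x, x⟫ :=
  Real.sq_sqrt (hA.2 x)

lemma re_inner_symmA (hA : A.IsPositive) (x y : H) :
    RCLike.re ⟪A y, x⟫ = RCLike.re ⟪A x, y⟫ := by
  have h1 : ⟪A y, x⟫ = ⟪y, A x⟫ := by
    conv_lhs => rw [← hA.isSelfAdjoint.adjoint_eq]
    exact adjoint_inner_left A x y
  rw [h1, ← inner_conj_symm]
  exact (RCLike.conj_re _)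

/-- Cauchy–Schwarz for the semi-inner product `⟪Ax, y⟫` (real-part version). -/
lemma reCS (hA : A.IsPositive) (x y : H) :
    RCLike.re ⟪A x, y⟫ ≤ vnormA A x * vnormA A y := by
  have hquad : ∀ t : ℝ, 0 ≤ (RCLike.re ⟪A y, y⟫) * (t * t)
      + (2 * RCLike.re ⟪A x, y⟫) * t + RCLike.re ⟪A x, x⟫ := by
    intro t
    have h0 : (0:ℝ) ≤ RCLike.re ⟪A (x + (t : ℂ) • y), (x + (t : ℂ) • y)⟫ :=
      hA.2 (x + (t : ℂ) • y)
    have hsymm := re_inner_symmA hA x y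
    have hexp : RCLike.re ⟪A (x + (t : ℂ) • y), (x + (t : ℂ) • y)⟫
        = (RCLike.re ⟪A y, y⟫) * (t * t)
          + (2 * RCLike.re ⟪A x, y⟫) * t + RCLike.re ⟪A x, x⟫ := by
      simp only [map_add, map_smul, inner_add_left, inner_add_right, inner_smul_left,
        inner_smul_right, Complex.conj_ofReal, RCLike.re_to_complex, Complex.add_re,
        Complex.re_ofReal_mul] at hsymm ⊢
      ring_nf
      linear_combination t * hsymm
    linarith [hexp ▸ h0]
  have hd := discrim_le_zero hquad
  rw [discrim] at hd
  have hb2 : (RCLike.re ⟪A x, y⟫) ^ 2 ≤ RCLike.re ⟪A x, x⟫ * RCLike.re ⟪A y, y⟫ := by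
    nlinarith [hd]
  calc RCLike.re ⟪A x, y⟫ ≤ |RCLike.re ⟪A x, y⟫| := le_abs_self _
    _ = Real.sqrt ((RCLike.re ⟪A x, y⟫) ^ 2) := (Real.sqrt_sq_eq_abs _).symm
    _ ≤ Real.sqrt (RCLike.re ⟪A x, x⟫ * RCLike.re ⟪A y, y⟫) := Real.sqrt_le_sqrt hb2
    _ = vnormA A x * vnormA A y :=
        Real.sqrt_mul (show (0:ℝ) ≤ RCLike.re ⟪A x, x⟫ from hA.2 x) _

lemma vnormA_add (hA : A.IsPositive) (x y : H) :
    vnormA A (x + y) ≤ vnormA A x + vnormA A y := by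
  have h1 : vnormA A (x + y) ^ 2 ≤ (vnormA A x + vnormA A y) ^ 2 := by
    rw [vnormA_sq hA]
    have hre : RCLike.re ⟪A (x + y), x + y⟫
        = RCLike.re ⟪A x, x⟫ + RCLike.re ⟪A x, y⟫ + RCLike.re ⟪A y, x⟫
          + RCLike.re ⟪A y, y⟫ := by
      simp only [map_add, inner_add_left, inner_add_right, RCLike.re_to_complex,
        Complex.add_re]
      ring
    rw [hre, re_inner_symmA hA x y, ← vnormA_sq hA x, ← vnormA_sq hA y]
    nlinarith [reCS hA x y]
  calc vnormA A (x + y) = Real.sqrt (vnormA A (x + y) ^ 2) :=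
        (Real.sqrt_sq (vnormA_nonneg A _)).symm
    _ ≤ Real.sqrt ((vnormA A x + vnormA A y) ^ 2) := Real.sqrt_le_sqrt h1
    _ = vnormA A x + vnormA A y :=
        Real.sqrt_sq (add_nonneg (vnormA_nonneg A _) (vnormA_nonneg A _))

lemma vnormA_smul (A : H →L[ℂ] H) (c : ℂ) (x : H) :
    vnormA A (c • x) = ‖c‖ * vnormA A x := by
  unfold vnormA
  rw [map_smul, inner_smul_left, inner_smul_right, ← mul_assoc, Complex.conj_mul']
  rw [show ((‖c‖ : ℂ))^2 = ((‖c‖^2 : ℝ) : ℂ) by push_cast; ring]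
  simp only [RCLike.re_to_complex, Complex.re_ofReal_mul]
  rw [Real.sqrt_mul (by positivity), Real.sqrt_sq (norm_nonneg c)]


lemma opNormA_nonneg (A X : H →L[ℂ] H) : 0 ≤ opNormA A X :=
  Real.sSup_nonneg (by rintro r ⟨x, -, rfl⟩; exact vnormA_nonneg A _)

lemma opNormA_le {X : H →L[ℂ] H} {c : ℝ} (hc : 0 ≤ c)
    (h : ∀ x, vnormA A (X x) ≤ c * vnormA A x) : opNormA A X ≤ c :=
  Real.sSup_le (by rintro r ⟨x, hx, rfl⟩; simpa [hx] using h x) hc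

lemma le_opNormA {X : H →L[ℂ] H} {c : ℝ}
    (hX : ∀ x, vnormA A (X x) ≤ c * vnormA A x) (x : H) :
    vnormA A (X x) ≤ opNormA A X * vnormA A x := by
  rcases eq_or_lt_of_le (vnormA_nonneg A x) with h0 | h0
  · have := hX x
    rw [← h0, mul_zero] at this ⊢
    exact this
  · set t := vnormA A x with ht
    have hy : vnormA A ((t⁻¹ : ℂ) • x) = 1 := by
      rw [vnormA_smul]
      have : ‖((t : ℂ)⁻¹)‖ = t⁻¹ := by
        rw [norm_inv, Complex.norm_real, Real.norm_eq_abs, abs_of_pos h0]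
      push_cast
      rw [this, inv_mul_cancel₀ (ne_of_gt h0)]
    have hmem : vnormA A (X ((t⁻¹ : ℂ) • x)) ∈
        {r : ℝ | ∃ z : H, vnormA A z = 1 ∧ r = vnormA A (X z)} :=
      ⟨(t⁻¹ : ℂ) • x, hy, rfl⟩
    have hbdd : BddAbove {r : ℝ | ∃ z : H, vnormA A z = 1 ∧ r = vnormA A (X z)} := by
      refine ⟨max c 0, ?_⟩
      rintro r ⟨z, hz, rfl⟩
      have := hX z
      rw [hz, mul_one] at this
      exact this.trans (le_max_left _ _)
    have hle : vnormA A (X ((t⁻¹ : ℂ) • x)) ≤ opNormA A X := le_csSup hbdd hmem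
    rw [map_smul, vnormA_smul, norm_inv, Complex.norm_real, Real.norm_eq_abs, abs_of_pos h0] at hle
    calc vnormA A (X x) = t * (t⁻¹ * vnormA A (X x)) := by
          field_simp
      _ ≤ t * opNormA A X := by
          exact mul_le_mul_of_nonneg_left hle (le_of_lt h0)
      _ = opNormA A X * t := mul_comm _ _

/-- Key lemma: if `A` and `A ∘ B` are positive then `re⟪ABx, x⟫ ≤ ‖B‖ · re⟪Ax, x⟫`. -/
lemma keyineq (hA : A.IsPositive) {B : H →L[ℂ] H} (hAB : (A ∘L B).IsPositive) (x : H) :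
    RCLike.re ⟪A (B x), x⟫ ≤ ‖B‖ * RCLike.re ⟪A x, x⟫ := by
  by_cases hB0 : B = 0
  · simp [hB0, hA.2 x, mul_nonneg (norm_nonneg (0 : H →L[ℂ] H)) (hA.2 x)]
  -- move lemma
  have hcomm : adjoint B ∘L A = A ∘L B := by
    have h1 := hAB.isSelfAdjoint.adjoint_eq
    rwa [adjoint_comp, hA.isSelfAdjoint.adjoint_eq] at h1
  have hmove : ∀ u v : H, ⟪A (B u), v⟫ = ⟪A u, B v⟫ := by
    intro u v
    have : A (B u) = (adjoint B) (A u) := by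
      have := congrArg (fun (f : H →L[ℂ] H) => f u) hcomm
      simpa using this.symm
    rw [this, adjoint_inner_left]
  have hmoveN : ∀ n : ℕ, ∀ u v : H, ⟪A ((B ^ n) u), v⟫ = ⟪A u, (B ^ n) v⟫ := by
    intro n
    induction n with
    | zero => intro u v; simp
    | succ n ih =>
        intro u v
        have h1 : (B ^ (n + 1)) u = (B ^ n) (B u) := by
          rw [pow_succ]; simp [mul_apply]
        have h2 : (B ^ (n + 1)) v = B ((B ^ n) v) := by
          rw [pow_succ']; simp [mul_apply]
        rw [h1, ih (B u) v, hmove u ((B ^ n) v), h2]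
  set c : ℕ → ℝ := fun n => RCLike.re ⟪A ((B ^ n) x), x⟫ with hcdef
  have hc2m : ∀ m : ℕ, c (2 * m) = vnormA A ((B ^ m) x) ^ 2 := by
    intro m
    rw [vnormA_sq hA]
    have : (B ^ (2 * m)) x = (B ^ m) ((B ^ m) x) := by
      rw [two_mul, pow_add]; simp [mul_apply]
    simp only [hcdef, this, hmoveN m ((B ^ m) x) x]
  have hCS : ∀ m : ℕ, c m ≤ Real.sqrt (c (2 * m)) * Real.sqrt (c 0) := by
    intro m
    have h1 : c m ≤ vnormA A ((B ^ m) x) * vnormA A x := reCS hA _ _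
    have h2 : vnormA A ((B ^ m) x) = Real.sqrt (c (2 * m)) := by
      rw [hc2m m, Real.sqrt_sq (vnormA_nonneg A _)]
    have h3 : vnormA A x = Real.sqrt (c 0) := by
      simp only [hcdef, pow_zero, one_apply]; rfl
    rw [← h2, ← h3]; exact h1
  have hc0 : 0 ≤ c 0 := hA.2 x
  have hc1 : 0 ≤ c 1 := by
    have := hAB.2 x
    simpa [hcdef, reApplyInnerSelf, comp_apply] using this
  have hcp : ∀ n : ℕ, 0 ≤ c (2 ^ n) := by
    intro n
    cases n with
    | zero => simpa using hc1
    | succ n =>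
        have : (2 : ℕ) ^ (n + 1) = 2 * 2 ^ n := by ring
        rw [this, hc2m]; positivity
  have hsq : ∀ n : ℕ, c (2 ^ n) ^ 2 ≤ c (2 ^ (n + 1)) * c 0 := by
    intro n
    have h1 := hCS (2 ^ n)
    have h2 : (2 : ℕ) * 2 ^ n = 2 ^ (n + 1) := by ring
    rw [h2] at h1
    have h3 : c (2 ^ n) ^ 2 ≤ (Real.sqrt (c (2 ^ (n + 1))) * Real.sqrt (c 0)) ^ 2 := by
      apply pow_le_pow_left₀ (hcp n) h1
    calc c (2 ^ n) ^ 2 ≤ (Real.sqrt (c (2 ^ (n + 1))) * Real.sqrt (c 0)) ^ 2 := h3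
      _ = Real.sqrt (c (2 ^ (n + 1))) ^ 2 * Real.sqrt (c 0) ^ 2 := by ring
      _ = c (2 ^ (n + 1)) * c 0 := by
          rw [Real.sq_sqrt (hcp (n + 1)), Real.sq_sqrt hc0]
  -- case c 0 = 0
  rcases eq_or_lt_of_le hc0 with h00 | h00
  · have h1 := hCS 1
    rw [← h00] at h1
    simp only [Real.sqrt_zero, mul_zero] at h1
    have hc1' : c 1 = 0 := le_antisymm h1 hc1
    have : RCLike.re ⟪A (B x), x⟫ = c 1 := by simp [hcdef]
    rw [this, hc1']
    exact mul_nonneg (norm_nonneg B) (hA.2 x)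
  -- main induction
  · have hind : ∀ n : ℕ, c 1 ^ (2 ^ n) * c 0 ≤ c 0 ^ (2 ^ n) * c (2 ^ n) := by
      intro n
      induction n with
      | zero => simp [mul_comm]
      | succ n ih =>
          have hL : 0 ≤ c 1 ^ (2 ^ n) * c 0 := by positivity
          have h1 : (c 1 ^ (2 ^ n) * c 0) ^ 2 ≤ (c 0 ^ (2 ^ n) * c (2 ^ n)) ^ 2 :=
            pow_le_pow_left₀ hL ih 2
          have h2 : (c 0 ^ (2 ^ n) * c (2 ^ n)) ^ 2
              ≤ c 0 ^ (2 ^ (n + 1)) * (c (2 ^ (n + 1)) * c 0) := by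
            have := hsq n
            have e1 : (c 0 ^ (2 ^ n) * c (2 ^ n)) ^ 2
                = (c 0 ^ (2 ^ n)) ^ 2 * c (2 ^ n) ^ 2 := by ring
            have e2 : (c 0 ^ (2 ^ n) : ℝ) ^ 2 = c 0 ^ (2 ^ (n + 1)) := by
              rw [← pow_mul, pow_succ]
            rw [e1, e2]
            apply mul_le_mul_of_nonneg_left this (by positivity)
          have h3 : (c 1 ^ (2 ^ n) * c 0) ^ 2 = (c 1 ^ (2 ^ (n + 1)) * c 0) * c 0 := by
            have e : (2:ℕ) ^ (n + 1) = 2 ^ n * 2 := pow_succ 2 n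
            rw [e, pow_mul]
            ring
          have h4 : (c 1 ^ (2 ^ (n + 1)) * c 0) * c 0
              ≤ (c 0 ^ (2 ^ (n + 1)) * c (2 ^ (n + 1))) * c 0 := by
            rw [← h3]
            calc (c 1 ^ (2 ^ n) * c 0) ^ 2 ≤ (c 0 ^ (2 ^ n) * c (2 ^ n)) ^ 2 := h1
              _ ≤ c 0 ^ (2 ^ (n + 1)) * (c (2 ^ (n + 1)) * c 0) := h2
              _ = (c 0 ^ (2 ^ (n + 1)) * c (2 ^ (n + 1))) * c 0 := by ring
          exact le_of_mul_le_mul_right h4 h00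
    -- norm bound
    have hbound : ∀ n : ℕ, c (2 ^ n) ≤ (‖A‖ * ‖x‖ ^ 2) * ‖B‖ ^ (2 ^ n) := by
      intro n
      have h1 : c (2 ^ n) ≤ ‖A ((B ^ (2 ^ n)) x)‖ * ‖x‖ := re_inner_le_norm _ _
      have h2 : ‖A ((B ^ (2 ^ n)) x)‖ ≤ ‖A‖ * ‖(B ^ (2 ^ n)) x‖ := le_opNorm A _
      have h3 : ‖(B ^ (2 ^ n)) x‖ ≤ ‖B ^ (2 ^ n)‖ * ‖x‖ := le_opNorm _ _
      have h4 : ‖B ^ (2 ^ n)‖ ≤ ‖B‖ ^ (2 ^ n) := norm_pow_le' B (by positivity)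
      calc c (2 ^ n) ≤ ‖A ((B ^ (2 ^ n)) x)‖ * ‖x‖ := h1
        _ ≤ (‖A‖ * ‖(B ^ (2 ^ n)) x‖) * ‖x‖ := by
            apply mul_le_mul_of_nonneg_right h2 (norm_nonneg x)
        _ ≤ (‖A‖ * (‖B ^ (2 ^ n)‖ * ‖x‖)) * ‖x‖ := by
            have := mul_le_mul_of_nonneg_left h3 (norm_nonneg A)
            exact mul_le_mul_of_nonneg_right this (norm_nonneg x)
        _ ≤ (‖A‖ * (‖B‖ ^ (2 ^ n) * ‖x‖)) * ‖x‖ := by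
            have h5 := mul_le_mul_of_nonneg_right h4 (norm_nonneg x)
            have h6 := mul_le_mul_of_nonneg_left h5 (norm_nonneg A)
            exact mul_le_mul_of_nonneg_right h6 (norm_nonneg x)
        _ = (‖A‖ * ‖x‖ ^ 2) * ‖B‖ ^ (2 ^ n) := by ring
    -- conclude
    have hgoal : c 1 ≤ ‖B‖ * c 0 := by
      by_contra hlt
      push_neg at hlt
      have hBpos : 0 < ‖B‖ := norm_pos_iff.mpr hB0
      have hden : 0 < ‖B‖ * c 0 := mul_pos hBpos h00
      have hr : 1 < c 1 / (‖B‖ * c 0) := (one_lt_div hden).mpr hlt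
      set r := c 1 / (‖B‖ * c 0) with hrdef
      obtain ⟨n, hn⟩ := pow_unbounded_of_one_lt ((‖A‖ * ‖x‖ ^ 2) / c 0) hr
      have hup : r ^ n ≤ r ^ (2 ^ n) :=
        pow_le_pow_right₀ (le_of_lt hr) (Nat.lt_two_pow_self (n := n)).le
      have hle : r ^ (2 ^ n) ≤ (‖A‖ * ‖x‖ ^ 2) / c 0 := by
        have h1 := (hind n).trans
          (mul_le_mul_of_nonneg_left (hbound n) (by positivity))
        have hpow : (0:ℝ) < (‖B‖ * c 0) ^ (2 ^ n) := by positivity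
        rw [hrdef, div_pow, div_le_div_iff₀ (by positivity) h00]
        calc c 1 ^ (2 ^ n) * c 0
            ≤ (c 0 ^ (2 ^ n) * ((‖A‖ * ‖x‖ ^ 2) * ‖B‖ ^ (2 ^ n))) := h1
          _ = (‖A‖ * ‖x‖ ^ 2) * (‖B‖ * c 0) ^ (2 ^ n) := by
              rw [mul_pow]; ring
      have := hn.trans_le (hup.trans hle)
      exact lt_irrefl _ this
    have : RCLike.re ⟪A (B x), x⟫ = c 1 := by simp [hcdef]
    rw [this]
    exact hgoal.trans_eq rfl


lemma flip_eq (hA : A.IsPositive) {X Xs : H →L[ℂ] H}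
    (hEq : A ∘L Xs = adjoint X ∘L A) : A ∘L X = adjoint Xs ∘L A := by
  have h := congrArg adjoint hEq
  rw [adjoint_comp, adjoint_comp, adjoint_adjoint, hA.isSelfAdjoint.adjoint_eq] at h
  exact h.symm

lemma abound_of_eq (hA : A.IsPositive) {X Xs : H →L[ℂ] H}
    (hEq : A ∘L Xs = adjoint X ∘L A) (x : H) :
    vnormA A (X x) ≤ Real.sqrt ‖Xs ∘L X‖ * vnormA A x := by
  have hpos : (A ∘L (Xs ∘L X)).IsPositive := by
    have h1 : A ∘L (Xs ∘L X) = adjoint X ∘L (A ∘L X) := by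
      rw [← comp_assoc, hEq, comp_assoc]
    rw [h1]
    exact hA.adjoint_conj X
  have hkey := keyineq hA hpos x
  have h1 : RCLike.re ⟪A ((Xs ∘L X) x), x⟫ = vnormA A (X x) ^ 2 := by
    rw [vnormA_sq hA]
    have h2 : A (Xs (X x)) = (adjoint X) (A (X x)) := by
      have := congrArg (fun f : H →L[ℂ] H => f (X x)) hEq
      simpa [comp_apply] using this
    rw [comp_apply, h2, adjoint_inner_left]
  rw [h1] at hkey
  have h3 : ‖Xs ∘L X‖ * RCLike.re ⟪A x, x⟫
      = (Real.sqrt ‖Xs ∘L X‖ * vnormA A x) ^ 2 := by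
    rw [mul_pow, Real.sq_sqrt (norm_nonneg _), vnormA_sq hA]
  rw [h3] at hkey
  calc vnormA A (X x) = Real.sqrt (vnormA A (X x) ^ 2) :=
        (Real.sqrt_sq (vnormA_nonneg A _)).symm
    _ ≤ Real.sqrt ((Real.sqrt ‖Xs ∘L X‖ * vnormA A x) ^ 2) := Real.sqrt_le_sqrt hkey
    _ = Real.sqrt ‖Xs ∘L X‖ * vnormA A x :=
        Real.sqrt_sq (mul_nonneg (Real.sqrt_nonneg _) (vnormA_nonneg A _))

lemma opNormA_flip_le (hA : A.IsPositive) {X Xs : H →L[ℂ] H}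
    (hEq : A ∘L Xs = adjoint X ∘L A) : opNormA A Xs ≤ opNormA A X := by
  have hXb := abound_of_eq hA hEq
  apply opNormA_le (opNormA_nonneg A X)
  intro y
  have h1 : vnormA A (Xs y) ^ 2 ≤ vnormA A y * (opNormA A X * vnormA A (Xs y)) := by
    rw [vnormA_sq hA]
    have h2 : A (Xs y) = (adjoint X) (A y) := by
      have := congrArg (fun f : H →L[ℂ] H => f y) hEq
      simpa [comp_apply] using this
    rw [h2, adjoint_inner_left]
    calc RCLike.re ⟪A y, X (Xs y)⟫ ≤ vnormA A y * vnormA A (X (Xs y)) := reCS hA _ _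
      _ ≤ vnormA A y * (opNormA A X * vnormA A (Xs y)) :=
          mul_le_mul_of_nonneg_left (le_opNormA hXb (Xs y)) (vnormA_nonneg A y)
  rcases eq_or_lt_of_le (vnormA_nonneg A (Xs y)) with h0 | h0
  · rw [← h0]
    exact mul_nonneg (opNormA_nonneg A X) (vnormA_nonneg A y)
  · have h4 : vnormA A (Xs y) * vnormA A (Xs y)
        ≤ (opNormA A X * vnormA A y) * vnormA A (Xs y) := by
      have := h1
      rw [sq] at this
      calc vnormA A (Xs y) * vnormA A (Xs y)
          ≤ vnormA A y * (opNormA A X * vnormA A (Xs y)) := this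
        _ = (opNormA A X * vnormA A y) * vnormA A (Xs y) := by ring
    exact le_of_mul_le_mul_right h4 h0

end Aux


theorem stmt16 {H : Type*} [NormedAddCommGroup H] [InnerProductSpace ℂ H] [CompleteSpace H]
    (A : H →L[ℂ] H) (hA : A.IsPositive)
    (T S Ts Ss : H →L[ℂ] H)
    (hT : IsReducedAdjoint A T Ts) (hS : IsReducedAdjoint A S Ss) :
    |(opNormA A (T + S)) ^ 2 - (opNormA A (T - S)) ^ 2| / 2 +
      max (opNormA A (T ∘L T + S ∘L S))
        (max (opNormA A (Ts ∘L T + Ss ∘L S)) (opNormA A (T ∘L Ts + S ∘L Ss))) ≤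
    max ((opNormA A (T + S)) ^ 2) ((opNormA A (T - S)) ^ 2) := by
  obtain ⟨hTeq, -⟩ := hT
  obtain ⟨hSeq, -⟩ := hS
  have hPeq : A ∘L (Ts + Ss) = adjoint (T + S) ∘L A := by
    rw [comp_add, hTeq, hSeq, map_add, add_comp]
  have hMeq : A ∘L (Ts - Ss) = adjoint (T - S) ∘L A := by
    rw [comp_sub, hTeq, hSeq, map_sub, sub_comp]
  have hPeq' := flip_eq hA hPeq
  have hMeq' := flip_eq hA hMeq
  have bP := abound_of_eq hA hPeq
  have bM := abound_of_eq hA hMeq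
  have bPs := abound_of_eq hA hPeq'
  have bMs := abound_of_eq hA hMeq'
  set a := opNormA A (T + S) with hadef
  set b := opNormA A (T - S) with hbdef
  have lP : ∀ x, vnormA A ((T + S) x) ≤ a * vnormA A x := le_opNormA bP
  have lM : ∀ x, vnormA A ((T - S) x) ≤ b * vnormA A x := le_opNormA bM
  have lPs : ∀ x, vnormA A ((Ts + Ss) x) ≤ opNormA A (Ts + Ss) * vnormA A x :=
    le_opNormA bPs
  have lMs : ∀ x, vnormA A ((Ts - Ss) x) ≤ opNormA A (Ts - Ss) * vnormA A x :=
    le_opNormA bMs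
  have sP : opNormA A (Ts + Ss) ≤ a := opNormA_flip_le hA hPeq
  have sM : opNormA A (Ts - Ss) ≤ b := opNormA_flip_le hA hMeq
  have ha0 : 0 ≤ a := opNormA_nonneg A _
  have hb0 : 0 ≤ b := opNormA_nonneg A _
  have habs : ‖(2⁻¹ : ℂ)‖ = 2⁻¹ := by norm_num [map_inv₀]
  have k1 : opNormA A (T ∘L T + S ∘L S) ≤ (a ^ 2 + b ^ 2) / 2 := by
    apply opNormA_le (by positivity)
    intro x
    have hxid : (T ∘L T + S ∘L S) x
        = (2⁻¹ : ℂ) • ((T + S) ((T + S) x) + (T - S) ((T - S) x)) := by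
      simp only [add_apply, sub_apply, comp_apply, map_add, map_sub, smul_add, smul_sub]
      module
    rw [hxid, vnormA_smul, habs]
    have t1 : vnormA A ((T + S) ((T + S) x)) ≤ a * (a * vnormA A x) :=
      (lP _).trans (mul_le_mul_of_nonneg_left (lP x) ha0)
    have t2 : vnormA A ((T - S) ((T - S) x)) ≤ b * (b * vnormA A x) :=
      (lM _).trans (mul_le_mul_of_nonneg_left (lM x) hb0)
    have tri := vnormA_add hA ((T + S) ((T + S) x)) ((T - S) ((T - S) x))
    nlinarith [vnormA_nonneg A x, vnormA_nonneg A ((T + S) ((T + S) x)),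
      vnormA_nonneg A ((T - S) ((T - S) x))]
  have k2 : opNormA A (Ts ∘L T + Ss ∘L S) ≤ (a ^ 2 + b ^ 2) / 2 := by
    apply opNormA_le (by positivity)
    intro x
    have hxid : (Ts ∘L T + Ss ∘L S) x
        = (2⁻¹ : ℂ) • ((Ts + Ss) ((T + S) x) + (Ts - Ss) ((T - S) x)) := by
      simp only [add_apply, sub_apply, comp_apply, map_add, map_sub, smul_add, smul_sub]
      module
    rw [hxid, vnormA_smul, habs]
    have t1 : vnormA A ((Ts + Ss) ((T + S) x)) ≤ a * (a * vnormA A x) :=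
      (lPs _).trans (mul_le_mul sP (lP x) (vnormA_nonneg A _) ha0)
    have t2 : vnormA A ((Ts - Ss) ((T - S) x)) ≤ b * (b * vnormA A x) :=
      (lMs _).trans (mul_le_mul sM (lM x) (vnormA_nonneg A _) hb0)
    have tri := vnormA_add hA ((Ts + Ss) ((T + S) x)) ((Ts - Ss) ((T - S) x))
    nlinarith [vnormA_nonneg A x]
  have k3 : opNormA A (T ∘L Ts + S ∘L Ss) ≤ (a ^ 2 + b ^ 2) / 2 := by
    apply opNormA_le (by positivity)
    intro x
    have hxid : (T ∘L Ts + S ∘L Ss) x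
        = (2⁻¹ : ℂ) • ((T + S) ((Ts + Ss) x) + (T - S) ((Ts - Ss) x)) := by
      simp only [add_apply, sub_apply, comp_apply, map_add, map_sub, smul_add, smul_sub]
      module
    rw [hxid, vnormA_smul, habs]
    have t1 : vnormA A ((T + S) ((Ts + Ss) x)) ≤ a * (a * vnormA A x) := by
      refine (lP _).trans ?_
      apply mul_le_mul_of_nonneg_left _ ha0
      exact (lPs x).trans (mul_le_mul_of_nonneg_right sP (vnormA_nonneg A x))
    have t2 : vnormA A ((T - S) ((Ts - Ss) x)) ≤ b * (b * vnormA A x) := by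
      refine (lM _).trans ?_
      apply mul_le_mul_of_nonneg_left _ hb0
      exact (lMs x).trans (mul_le_mul_of_nonneg_right sM (vnormA_nonneg A x))
    have tri := vnormA_add hA ((T + S) ((Ts + Ss) x)) ((T - S) ((Ts - Ss) x))
    nlinarith [vnormA_nonneg A x]
  have hmax : max (opNormA A (T ∘L T + S ∘L S))
      (max (opNormA A (Ts ∘L T + Ss ∘L S)) (opNormA A (T ∘L Ts + S ∘L Ss)))
      ≤ (a ^ 2 + b ^ 2) / 2 := max_le k1 (max_le k2 k3)
  rcases le_total (a ^ 2) (b ^ 2) with h | h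
  · rw [abs_of_nonpos (by linarith), max_eq_right h]
    linarith
  · rw [abs_of_nonneg (by linarith), max_eq_left h]
    linarith
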